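/- Let {PR_j(s,0)} satisfy the (·,0)-system (coupled with a 1S family) and {PR_j(s,r)}_{r≥1} satisfy the (·,r)-system, all with nonnegative entries. Fix n ≥ 0 and assume that for each 0 ≤ k ≤ n the vectors φR^{(k)}_j := Σ_{s=0}^∞ s(s−1)⋯(s−k+1)·PR_j(s,0) and ψ^{(k)}_j := Σ_{s≥0} Σ_{r≥1} s(s−1)⋯(s−k+1)·PR_j(s,r) converge entrywise for 1 ≤ j ≤ N. Define L_1 = I_N − D_1(0) and, for 2 ≤ j ≤ N, L_j = I_{N−j+1} − (1−δ_{j,N})D_j(0) − D_{j−1}(1)·L_{j−1}^{−1}·(F_{j−1} + (1−δ_{j,2})D_j(2)); assume each L_j is invertible. Then for 1 ≤ j ≤ N: ψ^{(n)}_j = l^{(n)}_j + (1−δ_{j,N})·L_j^{−1}·(F_j + (1−δ_{j,1})D_{j+1}(2))·ψ^{(n)}_{j+1}, where l^{(n)}_1 = L_1^{−1}·(1−δ_{1,N})·F_1·φR^{(n)}_2 and, for 2 ≤ j ≤ N, l^{(n)}_j = L_j^{−1}·(D_{j−1}(1)·l^{(n)}_{j−1} + (1−δ_{j,N})·F_j·φR^{(n)}_{j+1}).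 -/
import Mathlib


open Matrix

noncomputable section

/-- The model parameters of the two-strain hospital-ward Markov chain. -/
structure ModelParams where
  β : ℝ
  μ : ℝ
  γ : ℝ
  τ1 : ℝ
  τ2 : ℝ
  m : ℝ
  c : ℝ

/-- Positivity/range conditions on the parameters. -/
def ModelParams.Valid (π : ModelParams) : Prop :=
  0 < π.β ∧ 0 < π.μ ∧ 0 < π.γ ∧ 0 < π.τ1 ∧ 0 < π.τ2 ∧
    π.m ∈ Set.Ioo (0:ℝ) 1 ∧ π.c ∈ Set.Ioo (0:ℝ) 1

/-- The total exit rate `q(i,j)` of state `(i,j)`. -/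
def qr (N : ℕ) (π : ModelParams) (i j : ℕ) : ℝ :=
  ((N : ℝ) - i) * (((i : ℝ) - j * π.c) * π.β + π.m * π.μ)
    + ((i : ℝ) - j) * (π.γ + π.τ1 + π.τ2 + (1 - π.m) * π.μ)
    + (j : ℝ) * (π.γ + π.τ2 + π.μ)

/-- The matrix `B_j` (Appendix A/B; `B_0` for `j = 0`), 0-based indexing: the 1-based
row index `i` corresponds to `k + 1` for `k : Fin (N - j)`. -/
def Bm (N : ℕ) (π : ModelParams) (j : ℕ) : Matrix (Fin (N - j)) (Fin (N - j)) ℝ :=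
  fun k l =>
    if (l : ℕ) = (k : ℕ) then π.m * π.μ / qr N π (j + (k : ℕ) + 1) j
    else if (l : ℕ) = (k : ℕ) + 1 then
      ((N : ℝ) - j - ((k : ℕ) + 1)) * π.β / qr N π (j + (k : ℕ) + 1) j
    else 0

/-- The matrix `C_j(0)` (Appendix A/B; `C_0(0)` for `j = 0`). -/
def Cm0 (N : ℕ) (π : ModelParams) (j : ℕ) : Matrix (Fin (N - j)) (Fin (N - j)) ℝ :=
  fun k l =>
    if (l : ℕ) + 1 = (k : ℕ) then
      ((k : ℕ) : ℝ) * (π.γ + π.τ1 + π.τ2 + (1 - π.m) * π.μ) / qr N π (j + (k : ℕ) + 1) j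
    else if (l : ℕ) = (k : ℕ) then
      (((N : ℝ) - j - ((k : ℕ) + 1)) * (1 - π.m) * π.μ + ((k : ℕ) : ℝ) * π.m * π.μ)
        / qr N π (j + (k : ℕ) + 1) j
    else if (l : ℕ) = (k : ℕ) + 1 then
      ((N : ℝ) - j - ((k : ℕ) + 1)) * (((k : ℕ) : ℝ) * π.β + π.m * π.μ)
        / qr N π (j + (k : ℕ) + 1) j
    else 0

/-- The matrix `C_{j-1}(1)` (Appendix B), of dimension `(N-j) × (N-(j-1))`. -/
def Cm1 (N : ℕ) (π : ModelParams) (j : ℕ) :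
    Matrix (Fin (N - j)) (Fin (N - (j - 1))) ℝ :=
  fun k l =>
    if (l : ℕ) = (k : ℕ) then
      (j : ℝ) * (π.γ + π.τ2 + (1 - π.m) * π.μ) / qr N π (j + (k : ℕ) + 1) j
    else if (l : ℕ) = (k : ℕ) + 1 then
      (j : ℝ) * π.m * π.μ / qr N π (j + (k : ℕ) + 1) j
    else 0

/-- The matrix `C_{j+1}(2)` (Appendix B), of dimension `(N-j) × (N-(j+1))`. -/
def Cm2 (N : ℕ) (π : ModelParams) (j : ℕ) :
    Matrix (Fin (N - j)) (Fin (N - (j + 1))) ℝ :=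
  fun k l =>
    if (l : ℕ) = (k : ℕ) then
      ((N : ℝ) - j - ((k : ℕ) + 1)) * j * (1 - π.c) * π.β / qr N π (j + (k : ℕ) + 1) j
    else 0

/-- The vector `p_{j,1_S}` (Appendix A/B). -/
def pS (N : ℕ) (π : ModelParams) (j : ℕ) : Fin (N - j) → ℝ :=
  fun k => (π.γ + π.τ1 + π.τ2 + (1 - π.m) * π.μ) / qr N π (j + (k : ℕ) + 1) j

/-- The matrix `E_j` (Appendix C), diagonal, of dimension `(N-j+1) × (N-(j-1))`;
the 1-based row index `k` corresponds to state `(j-1+k, j)`. -/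
def Em (N : ℕ) (π : ModelParams) (j : ℕ) :
    Matrix (Fin (N - j + 1)) (Fin (N - (j - 1))) ℝ :=
  fun k l =>
    if (l : ℕ) = (k : ℕ) then π.m * π.μ / qr N π (j + (k : ℕ)) j else 0

/-- The matrix `F_j` (Appendix C), of dimension `(N-j+1) × (N-j)`. -/
def Fm (N : ℕ) (π : ModelParams) (j : ℕ) :
    Matrix (Fin (N - j + 1)) (Fin (N - (j + 1) + 1)) ℝ :=
  fun k l =>
    if (l : ℕ) = (k : ℕ) then
      ((N : ℝ) - j - (k : ℕ)) * (1 - π.c) * π.β / qr N π (j + (k : ℕ)) j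
    else 0

/-- The matrix `D_j(0)` (Appendix C). -/
def Dm0 (N : ℕ) (π : ModelParams) (j : ℕ) :
    Matrix (Fin (N - j + 1)) (Fin (N - j + 1)) ℝ :=
  fun k l =>
    if (l : ℕ) + 1 = (k : ℕ) then
      ((k : ℕ) : ℝ) * (π.γ + π.τ1 + π.τ2 + (1 - π.m) * π.μ) / qr N π (j + (k : ℕ)) j
    else if (l : ℕ) = (k : ℕ) then
      (((N : ℝ) - j - (k : ℕ)) * (1 - π.m) * π.μ + ((k : ℕ) : ℝ) * π.m * π.μ)
        / qr N π (j + (k : ℕ)) j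
    else if (l : ℕ) = (k : ℕ) + 1 then
      ((N : ℝ) - j - (k : ℕ)) * (((k : ℕ) : ℝ) * π.β + π.m * π.μ) / qr N π (j + (k : ℕ)) j
    else 0

/-- The matrix `D_{j-1}(1)` (Appendix C), of dimension `(N-j+1) × (N-j+2)`. -/
def Dm1 (N : ℕ) (π : ModelParams) (j : ℕ) :
    Matrix (Fin (N - j + 1)) (Fin (N - (j - 1) + 1)) ℝ :=
  fun k l =>
    if (l : ℕ) = (k : ℕ) then
      ((j : ℝ) - 1) * (π.γ + π.τ2 + (1 - π.m) * π.μ) / qr N π (j + (k : ℕ)) j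
    else if (l : ℕ) = (k : ℕ) + 1 then
      ((j : ℝ) - 1) * π.m * π.μ / qr N π (j + (k : ℕ)) j
    else 0

/-- The matrix `D_{j+1}(2)` (Appendix C), of dimension `(N-j+1) × (N-j)`. -/
def Dm2 (N : ℕ) (π : ModelParams) (j : ℕ) :
    Matrix (Fin (N - j + 1)) (Fin (N - (j + 1) + 1)) ℝ :=
  fun k l =>
    if (l : ℕ) = (k : ℕ) then
      ((N : ℝ) - j - (k : ℕ)) * ((j : ℝ) - 1) * (1 - π.c) * π.β / qr N π (j + (k : ℕ)) j
    else 0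

/-- The vector `p_{j,1_R}` (Section 3.2). -/
def pR (N : ℕ) (π : ModelParams) (j : ℕ) : Fin (N - j + 1) → ℝ :=
  fun k => (π.γ + π.τ2 + (1 - π.m) * π.μ) / qr N π (j + (k : ℕ)) j

/-- The `1S` first-step system (equations (1)–(4) of the paper) for the family of
conditional-probability vectors `P j s = P_{j,1_S}(s)`, `0 ≤ j ≤ N−1`. -/
def OneSSystem (N : ℕ) (π : ModelParams)
    (P : (j : ℕ) → ℕ → Fin (N - j) → ℝ) : Prop :=
  IsUnit (1 - Cm0 N π 0) ∧
  (∀ s : ℕ, P 0 s = (1 - Cm0 N π 0)⁻¹.mulVec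
      (if s = 0 then pS N π 0 else (Bm N π 0).mulVec (P 0 (s - 1)))) ∧
  (∀ j s : ℕ, j + 1 ≤ N - 1 →
    P (j + 1) s
      = (if s = 0 then pS N π (j + 1) else (Bm N π (j + 1)).mulVec (P (j + 1) (s - 1)))
        + (Cm1 N π (j + 1)).mulVec (P j s)
        + (if j + 1 = N - 1 then 0 else
            (Cm0 N π (j + 1)).mulVec (P (j + 1) s)
              + (Cm2 N π (j + 1)).mulVec (P (j + 2) s)))

/-- The `(·,0)`-system (Theorem 2 of the paper) for the vectors
`PR j s = P_{j,1_R}(s,0)`, `1 ≤ j ≤ N`, coupled with a `1S` family `P`. -/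
def RZeroSystem (N : ℕ) (π : ModelParams)
    (P : (j : ℕ) → ℕ → Fin (N - j) → ℝ)
    (PR : (j : ℕ) → ℕ → Fin (N - j + 1) → ℝ) : Prop :=
  (∀ s : ℕ, PR 1 s = (Dm0 N π 1).mulVec (PR 1 s)
      + (if s = 0 then pR N π 1 else (Em N π 1).mulVec (P 0 (s - 1)))) ∧
  (∀ j s : ℕ, 1 ≤ j → j + 1 ≤ N →
    PR (j + 1) s
      = (if s = 0 then pR N π (j + 1) else (Em N π (j + 1)).mulVec (P j (s - 1)))
        + (Dm1 N π (j + 1)).mulVec (PR j s)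
        + (if j + 1 = N then 0 else
            (Dm0 N π (j + 1)).mulVec (PR (j + 1) s)
              + (Dm2 N π (j + 1)).mulVec (PR (j + 2) s)))

/-- The `(·,r)`-system for `r ≥ 1` (Theorem 3 of the paper) for the vectors
`PR j s r = P_{j,1_R}(s,r)`, `1 ≤ j ≤ N`. -/
def RPosSystem (N : ℕ) (π : ModelParams)
    (PR : (j : ℕ) → ℕ → ℕ → Fin (N - j + 1) → ℝ) : Prop :=
  (∀ s r : ℕ, PR 1 s (r + 1) = (Dm0 N π 1).mulVec (PR 1 s (r + 1))
      + (Fm N π 1).mulVec (PR 2 s r)) ∧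
  (∀ j s r : ℕ, 1 ≤ j → j + 1 ≤ N →
    PR (j + 1) s (r + 1)
      = (if j + 1 = N then 0 else (Fm N π (j + 1)).mulVec (PR (j + 2) s r))
        + (Dm1 N π (j + 1)).mulVec (PR j s (r + 1))
        + (if j + 1 = N then 0 else
            (Dm0 N π (j + 1)).mulVec (PR (j + 1) s (r + 1))
              + (Dm2 N π (j + 1)).mulVec (PR (j + 2) s (r + 1))))

/-- **Corollary 2(ii) of the paper.** Recursive computation of the
factorial moments `ψ⁽ⁿ⁾_j = Σ_{s≥0} Σ_{r≥1} s(s−1)⋯(s−n+1) P_{j,1_R}(s,r)`: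
for `1 ≤ j ≤ N`,
`ψ⁽ⁿ⁾_j = l⁽ⁿ⁾_j + (1−δ_{j,N}) L_j⁻¹ (F_j + (1−δ_{j,1}) D_{j+1}(2)) ψ⁽ⁿ⁾_{j+1}`. -/

private lemma hasSum_split' {f : ℕ × ℕ → ℝ} {a b : ℝ}
    (h0 : HasSum (fun s : ℕ => f (s, 0)) a)
    (h1 : HasSum (fun p : ℕ × ℕ => f (p.1, p.2 + 1)) b) :
    HasSum f (a + b) := by
  classical
  set S : Set (ℕ × ℕ) := {p | p.2 = 0} with hS
  let e0 : ℕ ≃ S :=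
    { toFun := fun s => ⟨(s, 0), rfl⟩
      invFun := fun p => p.1.1
      left_inv := fun s => rfl
      right_inv := by rintro ⟨⟨s, r⟩, hr⟩; simp only [hS, Set.mem_setOf_eq] at hr; subst hr; rfl }
  let e1 : ℕ × ℕ ≃ ↥Sᶜ :=
    { toFun := fun p => ⟨(p.1, p.2 + 1), by simp [hS]⟩
      invFun := fun p => (p.1.1, p.1.2 - 1)
      left_inv := fun p => by simp
      right_inv := by
        rintro ⟨⟨s, r⟩, hr⟩
        simp only [hS, Set.mem_compl_iff, Set.mem_setOf_eq] at hr
        ext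
        · simp
        · simp; omega }
  have hA : HasSum (f ∘ (Subtype.val : S → ℕ × ℕ)) a := by
    have h : ((f ∘ Subtype.val) ∘ ⇑e0) = fun s => f (s, 0) := by funext s; rfl
    rw [← e0.hasSum_iff, h]; exact h0
  have hB : HasSum (f ∘ (Subtype.val : ↥Sᶜ → ℕ × ℕ)) b := by
    have h : ((f ∘ Subtype.val) ∘ ⇑e1) = fun p : ℕ × ℕ => f (p.1, p.2 + 1) := by funext p; rfl
    rw [← e1.hasSum_iff, h]; exact h1
  exact hA.add_compl hB

private lemma hs_mulVec' {ι m κ : Type*} [Fintype κ] (M : Matrix m κ ℝ)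
    (w : ι → ℝ) (g : ι → κ → ℝ) (v : κ → ℝ)
    (h : ∀ lx : κ, HasSum (fun x => w x * g x lx) (v lx)) (i : m) :
    HasSum (fun x => w x * M.mulVec (g x) i) (M.mulVec v i) := by
  have H := hasSum_sum (s := (Finset.univ : Finset κ))
      (f := fun lx x => M i lx * (w x * g x lx)) (a := fun lx => M i lx * v lx)
      (fun lx _ => (h lx).mul_left (M i lx))
  have hfun : (fun x => w x * M.mulVec (g x) i)
      = fun x => ∑ lx : κ, M i lx * (w x * g x lx) := by
    funext x
    simp [Matrix.mulVec, dotProduct, Finset.mul_sum, mul_left_comm]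
  have hval : M.mulVec v i = ∑ lx : κ, M i lx * v lx := by
    simp [Matrix.mulVec, dotProduct]
  rw [hfun, hval]; exact H

private lemma mulVec_solve' {d : Type*} [Fintype d] [DecidableEq d]
    (Lm : Matrix d d ℝ) (hL : IsUnit Lm) (v u : d → ℝ) (h : Lm.mulVec v = u) :
    v = Lm⁻¹.mulVec u := by
  rw [← h, Matrix.mulVec_mulVec,
    Matrix.nonsing_inv_mul _ ((Matrix.isUnit_iff_isUnit_det Lm).mp hL), Matrix.one_mulVec]

private lemma abstract_base' {a c : Type*} [Fintype a] [DecidableEq a] [Fintype c]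
    (D0 : Matrix a a ℝ) (F : Matrix a c ℝ) (La : Matrix a a ℝ) (hLa : IsUnit La)
    (hL : La = 1 - D0) (ψ1 : a → ℝ) (ψ2 φ2 : c → ℝ) (l1 : a → ℝ)
    (hl : l1 = La⁻¹.mulVec (F.mulVec φ2))
    (heq : ψ1 = D0.mulVec ψ1 + F.mulVec (φ2 + ψ2)) :
    ψ1 = l1 + (La⁻¹ * F).mulVec ψ2 := by
  rw [Matrix.mulVec_add] at heq
  have h2 : La.mulVec ψ1 = F.mulVec φ2 + F.mulVec ψ2 := by
    rw [hL, Matrix.sub_mulVec, Matrix.one_mulVec]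
    nth_rewrite 1 [heq]
    abel
  rw [mulVec_solve' La hLa _ _ h2, hl, Matrix.mulVec_add, Matrix.mulVec_mulVec,
    Matrix.mulVec_mulVec]

private lemma abstract_top' {a b : Type*} [Fintype a] [DecidableEq a] [Fintype b]
    (D1 : Matrix a b ℝ) (Li : Matrix b b ℝ) (Y : Matrix b a ℝ)
    (La : Matrix a a ℝ) (hLa : IsUnit La)
    (hL : La = 1 - 0 - D1 * Li * Y)
    (ψ1 : a → ℝ) (ψ0 : b → ℝ) (l0 : b → ℝ) (l1 : a → ℝ)
    (hl : l1 = La⁻¹.mulVec (D1.mulVec l0 + 0))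
    (heq : ψ1 = D1.mulVec ψ0)
    (hψ0 : ψ0 = l0 + (Li * Y).mulVec ψ1) :
    ψ1 = l1 + 0 := by
  rw [hψ0, Matrix.mulVec_add, Matrix.mulVec_mulVec] at heq
  have h2 : La.mulVec ψ1 = D1.mulVec l0 := by
    rw [hL, sub_zero, Matrix.sub_mulVec, Matrix.one_mulVec, Matrix.mul_assoc]
    nth_rewrite 1 [heq]
    abel
  rw [mulVec_solve' La hLa _ _ h2, hl]
  simp only [add_zero]

private lemma abstract_mid' {a b c : Type*} [Fintype a] [DecidableEq a] [Fintype b] [Fintype c]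
    (D1 : Matrix a b ℝ) (D0 : Matrix a a ℝ) (F D2 : Matrix a c ℝ)
    (Li : Matrix b b ℝ) (Y : Matrix b a ℝ)
    (La : Matrix a a ℝ) (hLa : IsUnit La)
    (hL : La = 1 - D0 - D1 * Li * Y)
    (ψ1 : a → ℝ) (ψ0 : b → ℝ) (ψ2 φ2 : c → ℝ) (l0 : b → ℝ) (l1 : a → ℝ)
    (hl : l1 = La⁻¹.mulVec (D1.mulVec l0 + F.mulVec φ2))
    (heq : ψ1 = F.mulVec (φ2 + ψ2) + D1.mulVec ψ0 + (D0.mulVec ψ1 + D2.mulVec ψ2))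
    (hψ0 : ψ0 = l0 + (Li * Y).mulVec ψ1) :
    ψ1 = l1 + (La⁻¹ * (F + D2)).mulVec ψ2 := by
  rw [hψ0] at heq
  simp only [Matrix.mulVec_add, Matrix.mulVec_mulVec] at heq
  have h2 : La.mulVec ψ1 = D1.mulVec l0 + F.mulVec φ2 + (F.mulVec ψ2 + D2.mulVec ψ2) := by
    rw [hL, Matrix.sub_mulVec, Matrix.sub_mulVec, Matrix.one_mulVec, Matrix.mul_assoc]
    nth_rewrite 1 [heq]
    abel
  rw [mulVec_solve' La hLa _ _ h2, hl, ← Matrix.mulVec_mulVec, Matrix.add_mulVec,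
    ← Matrix.mulVec_add]

theorem rPos_sMoments
    (N : ℕ) (hN : 2 ≤ N) (π : ModelParams) (hπ : π.Valid)
    (P : (j : ℕ) → ℕ → Fin (N - j) → ℝ)
    (hP : OneSSystem N π P)
    (PR : (j : ℕ) → ℕ → ℕ → Fin (N - j + 1) → ℝ)
    (hPR0 : RZeroSystem N π P (fun j s => PR j s 0))
    (hPRr : RPosSystem N π PR)
    (hPnn : ∀ j : ℕ, j ≤ N - 1 → ∀ (s : ℕ) (i : Fin (N - j)), 0 ≤ P j s i)
    (hPRnn : ∀ j : ℕ, 1 ≤ j → j ≤ N → ∀ (s r : ℕ) (i : Fin (N - j + 1)), 0 ≤ PR j s r i)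
    (n : ℕ)
    (φR : ℕ → (j : ℕ) → Fin (N - j + 1) → ℝ)
    (hφR : ∀ k : ℕ, k ≤ n → ∀ j : ℕ, 1 ≤ j → j ≤ N → ∀ i : Fin (N - j + 1),
      HasSum (fun s : ℕ => ((s.descFactorial k : ℕ) : ℝ) * PR j s 0 i) (φR k j i))
    (ψ : ℕ → (j : ℕ) → Fin (N - j + 1) → ℝ)
    (hψ : ∀ k : ℕ, k ≤ n → ∀ j : ℕ, 1 ≤ j → j ≤ N → ∀ i : Fin (N - j + 1),
      HasSum (fun p : ℕ × ℕ => ((p.1.descFactorial k : ℕ) : ℝ) * PR j p.1 (p.2 + 1) i)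
        (ψ k j i))
    (L : (j : ℕ) → Matrix (Fin (N - j + 1)) (Fin (N - j + 1)) ℝ)
    (hL1 : L 1 = 1 - Dm0 N π 1)
    (hLrec : ∀ j : ℕ, 1 ≤ j → j + 1 ≤ N →
      L (j + 1) = 1 - (if j + 1 = N then 0 else Dm0 N π (j + 1))
        - (show Matrix (Fin (N - (j + 1) + 1)) (Fin (N - j + 1)) ℝ from Dm1 N π (j + 1))
            * (L j)⁻¹ * (Fm N π j + (if j + 1 = 2 then 0 else Dm2 N π j)))
    (hLinv : ∀ j : ℕ, 1 ≤ j → j ≤ N → IsUnit (L j))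
    (l : (j : ℕ) → Fin (N - j + 1) → ℝ)
    (hl1 : l 1 = (L 1)⁻¹.mulVec
      (if 1 = N then 0 else (Fm N π 1).mulVec (φR n 2)))
    (hlrec : ∀ j : ℕ, 1 ≤ j → j + 1 ≤ N →
      l (j + 1) = (L (j + 1))⁻¹.mulVec
        ((Dm1 N π (j + 1)).mulVec (l j)
          + (if j + 1 = N then 0 else (Fm N π (j + 1)).mulVec (φR n (j + 2))))) :
    ∀ j : ℕ, 1 ≤ j → j ≤ N →
      ψ n j = l j
        + (if j = N then 0 else
            ((L j)⁻¹ * (Fm N π j + (if j = 1 then 0 else Dm2 N π j))).mulVec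
              (ψ n (j + 1))) := by
  classical
  have hψn := hψ n le_rfl
  have hφn := hφR n le_rfl
  intro j hj
  induction j, hj using Nat.le_induction with
  | base =>
    intro _
    have h1N : (1 : ℕ) ≠ N := by omega
    have key : ψ n 1 = (Dm0 N π 1).mulVec (ψ n 1)
        + (Fm N π 1).mulVec (φR n 2 + ψ n 2) := by
      funext i
      refine (hψn 1 le_rfl (by omega) i).unique ?_
      have hA := hs_mulVec' (Dm0 N π 1) (fun p : ℕ × ℕ => ((p.1.descFactorial n : ℕ) : ℝ))
        (fun p : ℕ × ℕ => PR 1 p.1 (p.2 + 1)) (ψ n 1)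
        (fun lx => hψn 1 le_rfl (by omega) lx) i
      have hB := hs_mulVec' (Fm N π 1) (fun p : ℕ × ℕ => ((p.1.descFactorial n : ℕ) : ℝ))
        (fun p : ℕ × ℕ => PR 2 p.1 p.2) (φR n 2 + ψ n 2)
        (fun lx => hasSum_split' (hφn 2 (by omega) (by omega) lx)
          (hψn 2 (by omega) (by omega) lx)) i
      have hfun : (fun p : ℕ × ℕ => ((p.1.descFactorial n : ℕ) : ℝ) * PR 1 p.1 (p.2 + 1) i)
          = fun p : ℕ × ℕ =>
              ((p.1.descFactorial n : ℕ) : ℝ) * (Dm0 N π 1).mulVec (PR 1 p.1 (p.2 + 1)) i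
              + ((p.1.descFactorial n : ℕ) : ℝ) * (Fm N π 1).mulVec (PR 2 p.1 p.2) i := by
        funext p
        conv_lhs => rw [hPRr.1 p.1 p.2]
        simp only [Pi.add_apply, mul_add]
      rw [hfun]
      exact hA.add hB
    have hres := abstract_base' (Dm0 N π 1) (Fm N π 1) (L 1)
      (hLinv 1 le_rfl (by omega)) hL1 (ψ n 1) (ψ n 2) (φR n 2) (l 1)
      (by rw [hl1, if_neg h1N]) key
    rw [if_neg h1N, if_pos rfl, add_zero]
    exact hres
  | succ j hj IH =>
    intro hj1N
    have hjN : j ≤ N := by omega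
    have hGj := IH hjN
    rw [if_neg (by omega : ¬ j = N)] at hGj
    have hX : (if j + 1 = 2 then (0 : Matrix (Fin (N - j + 1)) (Fin (N - (j + 1) + 1)) ℝ)
          else Dm2 N π j)
        = (if j = 1 then 0 else Dm2 N π j) := by
      by_cases h : j = 1
      · simp [h]
      · rw [if_neg (by omega), if_neg h]
    by_cases hcase : j + 1 = N
    · -- top case : j + 1 = N
      have key : ψ n (j + 1) = (Dm1 N π (j + 1)).mulVec (ψ n j) := by
        funext i
        refine (hψn (j + 1) (by omega) (by omega) i).unique ?_
        have hA := hs_mulVec' (Dm1 N π (j + 1))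
          (fun p : ℕ × ℕ => ((p.1.descFactorial n : ℕ) : ℝ))
          (fun p : ℕ × ℕ => PR j p.1 (p.2 + 1)) (ψ n j)
          (fun lx => hψn j hj hjN lx) i
        have hfun : (fun p : ℕ × ℕ =>
              ((p.1.descFactorial n : ℕ) : ℝ) * PR (j + 1) p.1 (p.2 + 1) i)
            = fun p : ℕ × ℕ =>
                ((p.1.descFactorial n : ℕ) : ℝ)
                  * (Dm1 N π (j + 1)).mulVec (PR j p.1 (p.2 + 1)) i := by
          funext p
          conv_lhs => rw [hPRr.2 j p.1 p.2 hj hj1N]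
          simp only [if_pos hcase, Pi.add_apply, Pi.zero_apply, zero_add, add_zero]
        rw [hfun]
        exact hA
      have hres := abstract_top' (Dm1 N π (j + 1)) (L j)⁻¹
        (Fm N π j + (if j = 1 then 0 else Dm2 N π j)) (L (j + 1))
        (hLinv (j + 1) (by omega) (by omega))
        (by rw [hLrec j hj hj1N, if_pos hcase, hX])
        (ψ n (j + 1)) (ψ n j) (l j) (l (j + 1))
        (by rw [hlrec j hj hj1N, if_pos hcase])
        key hGj
      rw [if_pos hcase]
      exact hres
    · -- middle case : j + 1 < N
      have key : ψ n (j + 1)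
          = (Fm N π (j + 1)).mulVec (φR n (j + 2) + ψ n (j + 2))
            + (Dm1 N π (j + 1)).mulVec (ψ n j)
            + ((Dm0 N π (j + 1)).mulVec (ψ n (j + 1))
              + (Dm2 N π (j + 1)).mulVec (ψ n (j + 2))) := by
        funext i
        refine (hψn (j + 1) (by omega) (by omega) i).unique ?_
        have hA := hs_mulVec' (Fm N π (j + 1))
          (fun p : ℕ × ℕ => ((p.1.descFactorial n : ℕ) : ℝ))
          (fun p : ℕ × ℕ => PR (j + 2) p.1 p.2) (φR n (j + 2) + ψ n (j + 2))
          (fun lx => hasSum_split' (hφn (j + 2) (by omega) (by omega) lx)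
            (hψn (j + 2) (by omega) (by omega) lx)) i
        have hB := hs_mulVec' (Dm1 N π (j + 1))
          (fun p : ℕ × ℕ => ((p.1.descFactorial n : ℕ) : ℝ))
          (fun p : ℕ × ℕ => PR j p.1 (p.2 + 1)) (ψ n j)
          (fun lx => hψn j hj hjN lx) i
        have hC := hs_mulVec' (Dm0 N π (j + 1))
          (fun p : ℕ × ℕ => ((p.1.descFactorial n : ℕ) : ℝ))
          (fun p : ℕ × ℕ => PR (j + 1) p.1 (p.2 + 1)) (ψ n (j + 1))
          (fun lx => hψn (j + 1) (by omega) (by omega) lx) i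
        have hD := hs_mulVec' (Dm2 N π (j + 1))
          (fun p : ℕ × ℕ => ((p.1.descFactorial n : ℕ) : ℝ))
          (fun p : ℕ × ℕ => PR (j + 2) p.1 (p.2 + 1)) (ψ n (j + 2))
          (fun lx => hψn (j + 2) (by omega) (by omega) lx) i
        have hfun : (fun p : ℕ × ℕ =>
              ((p.1.descFactorial n : ℕ) : ℝ) * PR (j + 1) p.1 (p.2 + 1) i)
            = fun p : ℕ × ℕ =>
                (((p.1.descFactorial n : ℕ) : ℝ)
                    * (Fm N π (j + 1)).mulVec (PR (j + 2) p.1 p.2) i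
                  + ((p.1.descFactorial n : ℕ) : ℝ)
                    * (Dm1 N π (j + 1)).mulVec (PR j p.1 (p.2 + 1)) i)
                + (((p.1.descFactorial n : ℕ) : ℝ)
                    * (Dm0 N π (j + 1)).mulVec (PR (j + 1) p.1 (p.2 + 1)) i
                  + ((p.1.descFactorial n : ℕ) : ℝ)
                    * (Dm2 N π (j + 1)).mulVec (PR (j + 2) p.1 (p.2 + 1)) i) := by
          funext p
          conv_lhs => rw [hPRr.2 j p.1 p.2 hj hj1N]
          simp only [if_neg hcase, Pi.add_apply, mul_add]
        rw [hfun]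
        exact (hA.add hB).add (hC.add hD)
      have hres := abstract_mid' (Dm1 N π (j + 1)) (Dm0 N π (j + 1))
        (Fm N π (j + 1)) (Dm2 N π (j + 1)) (L j)⁻¹
        (Fm N π j + (if j = 1 then 0 else Dm2 N π j)) (L (j + 1))
        (hLinv (j + 1) (by omega) (by omega))
        (by rw [hLrec j hj hj1N, if_neg hcase, hX])
        (ψ n (j + 1)) (ψ n j) (ψ n (j + 2)) (φR n (j + 2)) (l j) (l (j + 1))
        (by rw [hlrec j hj hj1N, if_neg hcase])
        key hGj
      rw [if_neg hcase, if_neg (by omega : ¬ j + 1 = 1)]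
      exact hres
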